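/- Let Y be a metric space and s: 𝔻 → Y a metric minimizing disc (a continuous map from the closed disc such that any majorization ⟨𝔻⟩_s → ⟨𝔻⟩_{s'} to another map s' spanning the same boundary curve is an isometry). Then s has no bubbles: for every point p ∈ Y, every connected component of 𝔻 ∖ s⁻¹({p}) contains a point of ∂𝔻. -/

import Mathlib

open Set ENNReal

/-- The length pseudometric induced by `f : X → Y`:
`⟨x−y⟩_f = inf {length (f ∘ γ) : γ a path in X from x to y}`. -/
noncomputable def lenPD {X Y : Type*} [TopologicalSpace X] [PseudoEMetricSpace Y]
    (f : X → Y) (x y : X) : ℝ≥0∞ :=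
  ⨅ γ : Path x y, eVariationOn (fun t => f (γ t)) Set.univ

/-- The closed unit disc `𝔻`. -/
abbrev Disc : Type := (Metric.closedBall (0 : ℂ) 1 : Set ℂ)

/-- Membership in the boundary circle `∂𝔻`. -/
def OnBdry (x : Disc) : Prop := ‖x.1‖ = 1

/-- `s : 𝔻 → Y` is a metric minimizing disc: any majorization
`μ : ⟨𝔻⟩_s → ⟨𝔻⟩_{s'}` (a short map with `δ_{s'} = μ ∘ δ_s`) onto the induced
length space of another map `s'` spanning the same boundary curve is an
isometry.  A map `μ` between the quotient length spaces is encoded by a map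
`T : 𝔻 → 𝔻` on representatives: `μ` is short iff `⟨T x − T y⟩_{s'} ≤ ⟨x − y⟩_s`
for all `x, y`, it commutes with the boundary projections iff
`⟨T u − u⟩_{s'} = 0` on `∂𝔻`, and it is an isometry iff it preserves the
induced length pseudodistances. -/
def IsMetricMinimizingDisc {Y : Type*} [MetricSpace Y] (s : Disc → Y) : Prop :=
  Continuous s ∧
  ∀ (s' : Disc → Y) (T : Disc → Disc), Continuous s' →
    (∀ u : Disc, OnBdry u → s' u = s u) →
    (∀ u : Disc, OnBdry u → lenPD s' (T u) u = 0) →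
    (∀ x y : Disc, lenPD s' (T x) (T y) ≤ lenPD s x y) →
    ∀ x y : Disc, lenPD s' (T x) (T y) = lenPD s x y

/-! ### Auxiliary lemmas -/

/-- The closed disc is locally path-connected. -/
instance Disc.instLocPathConnectedSpace : LocallyPathConnectedSpace Disc := by
  refine .of_bases (fun x => Metric.nhds_basis_ball) fun x ε hε => ?_
  rw [Topology.IsInducing.subtypeVal.isPathConnected_iff]
  have himg : Subtype.val '' (Metric.ball x ε) =
      Metric.ball (x : ℂ) ε ∩ Metric.closedBall 0 1 := by
    ext z
    constructor
    · rintro ⟨w, hw, rfl⟩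
      exact ⟨by simpa [Metric.mem_ball, Subtype.dist_eq] using hw, w.2⟩
    · rintro ⟨hz1, hz2⟩
      exact ⟨⟨z, hz2⟩, by simpa [Metric.mem_ball, Subtype.dist_eq] using hz1, rfl⟩
  rw [himg]
  refine Convex.isPathConnected ((convex_ball (x : ℂ) ε).inter (convex_closedBall 0 1)) ?_
  exact ⟨(x : ℂ), Metric.mem_ball_self hε, x.2⟩

instance Disc.instConnectedSpace : ConnectedSpace Disc :=
  Subtype.connectedSpace ⟨⟨0, Metric.mem_closedBall_self (by norm_num)⟩,
    (convex_closedBall (0 : ℂ) 1).isPreconnected⟩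

theorem lenPD_self {X Y : Type*} [TopologicalSpace X] [PseudoEMetricSpace Y]
    (f : X → Y) (x : X) : lenPD f x x = 0 := by
  refine le_antisymm (le_trans (iInf_le _ (Path.refl x)) (le_of_eq ?_)) zero_le
  refine eVariationOn.constant_on (f := fun t : unitInterval => f (Path.refl x t))
    (s := univ) ?_
  rintro a ⟨t, -, rfl⟩ b ⟨t', -, rfl⟩
  rfl

theorem edist_le_lenPD {X Y : Type*} [TopologicalSpace X] [PseudoEMetricSpace Y]
    (f : X → Y) (x y : X) : edist (f x) (f y) ≤ lenPD f x y := by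
  refine le_iInf fun γ => ?_
  calc edist (f x) (f y) = edist (f (γ 0)) (f (γ 1)) := by rw [γ.source, γ.target]
    _ ≤ eVariationOn (fun t => f (γ t)) univ :=
        eVariationOn.edist_le (fun t => f (γ t)) (mem_univ _) (mem_univ _)

/-- A path segment from inside an open set `C` to outside of it must hit
`closure C \ C`. -/
theorem path_crossing {X : Type*} [TopologicalSpace X] {a b : X} (γ : Path a b)
    {C : Set X} (hC : IsOpen C) {t t' : unitInterval} (htt' : t ≤ t')
    (ht : γ t ∈ C) (ht' : γ t' ∉ C) :
    ∃ r : unitInterval, r ∈ Icc t t' ∧ γ r ∈ closure C \ C := by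
  by_contra h
  push_neg at h
  set A : Set ℝ := γ.extend ⁻¹' C with hA
  set B : Set ℝ := γ.extend ⁻¹' (closure C)ᶜ with hB
  have hAopen : IsOpen A := hC.preimage γ.continuous_extend
  have hBopen : IsOpen B := (isClosed_closure.isOpen_compl).preimage γ.continuous_extend
  have hdisj : Disjoint A B := by
    rw [Set.disjoint_left]
    intro r hrA hrB
    exact hrB (subset_closure hrA)
  have hsub : Icc (t : ℝ) (t' : ℝ) ⊆ A ∪ B := by
    intro r hr
    have hr01 : r ∈ unitInterval := ⟨le_trans t.2.1 hr.1, le_trans hr.2 t'.2.2⟩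
    have hext : γ.extend r = γ ⟨r, hr01⟩ := Path.extend_apply γ hr01
    by_cases hcl : γ (⟨r, hr01⟩ : unitInterval) ∈ closure C
    · left
      have : γ (⟨r, hr01⟩ : unitInterval) ∈ C := by
        by_contra hnot
        exact (h ⟨r, hr01⟩ ⟨hr.1, hr.2⟩) ⟨hcl, hnot⟩
      simpa [hA, hext] using this
    · right
      simpa [hB, hext] using hcl
  rcases (isPreconnected_Icc).subset_or_subset hAopen hBopen hdisj hsub with hall | hall
  · have : (t' : ℝ) ∈ A := hall ⟨htt', le_rfl⟩
    rw [hA, mem_preimage, Path.extend_extends'] at this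
    exact ht' this
  · have : (t : ℝ) ∈ B := hall ⟨le_rfl, htt'⟩
    rw [hB, mem_preimage, Path.extend_extends'] at this
    exact this (subset_closure ht)

/-- Collapsing an open "bubble" `C` (whose relative frontier maps to `p`) does not
increase the length of the image of any path. -/
theorem collapse_var_le {X Y : Type*} [TopologicalSpace X] [PseudoEMetricSpace Y]
    (s : X → Y) (p : Y) {C : Set X} (hC : IsOpen C)
    (hfr : ∀ z, z ∈ closure C → z ∉ C → s z = p) [DecidablePred (· ∈ C)]
    {a b : X} (γ : Path a b) :
    eVariationOn (fun t => (if γ t ∈ C then p else s (γ t))) univ ≤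
      eVariationOn (fun t => s (γ t)) univ := by
  set f : unitInterval → Y := fun t => s (γ t) with hf
  set g : unitInterval → Y := fun t => if γ t ∈ C then p else s (γ t) with hg
  have step : ∀ t t' : unitInterval, t ≤ t' →
      edist (g t') (g t) ≤ eVariationOn f (univ ∩ Icc t t') := by
    intro t t' htt'
    have htmem : t ∈ univ ∩ Icc t t' := ⟨mem_univ _, le_rfl, htt'⟩
    have ht'mem : t' ∈ univ ∩ Icc t t' := ⟨mem_univ _, htt', le_rfl⟩
    by_cases h1 : γ t ∈ C <;> by_cases h2 : γ t' ∈ C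
    · simp [hg, h1, h2]
    · -- γ t ∈ C, γ t' ∉ C
      obtain ⟨r, hr, hrC⟩ := path_crossing γ hC htt' h1 h2
      have hrp : s (γ r) = p := hfr _ hrC.1 hrC.2
      have hrmem : r ∈ univ ∩ Icc t t' := ⟨mem_univ _, hr⟩
      calc edist (g t') (g t) = edist (f t') (f r) := by simp [hg, h1, h2, hrp, hf]
        _ ≤ _ := eVariationOn.edist_le f ht'mem hrmem
    · -- γ t ∉ C, γ t' ∈ C
      obtain ⟨r, hr, hrC⟩ := path_crossing (γ := γ.symm)
        (t := unitInterval.symm t') (t' := unitInterval.symm t) hC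
        (unitInterval.symm_le_symm.mpr htt')
        (by simpa [Path.symm_apply, unitInterval.symm_symm] using h2)
        (by simpa [Path.symm_apply, unitInterval.symm_symm] using h1)
      have hγr : γ.symm r = γ (unitInterval.symm r) := by simp [Path.symm_apply]
      rw [hγr] at hrC
      have hrp : s (γ (unitInterval.symm r)) = p := hfr _ hrC.1 hrC.2
      have hrmem : unitInterval.symm r ∈ univ ∩ Icc t t' := by
        refine ⟨mem_univ _, ?_, ?_⟩
        · simpa [unitInterval.symm_symm] using unitInterval.symm_le_symm.mpr hr.2
        · simpa [unitInterval.symm_symm] using unitInterval.symm_le_symm.mpr hr.1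
      calc edist (g t') (g t) = edist (f (unitInterval.symm r)) (f t) := by
            simp [hg, h1, h2, hf, hrp]
        _ ≤ _ := eVariationOn.edist_le f hrmem htmem
    · calc edist (g t') (g t) = edist (f t') (f t) := by simp [hg, h1, h2, hf]
        _ ≤ _ := eVariationOn.edist_le f ht'mem htmem
  refine iSup_le ?_
  rintro ⟨n, u, hu, -⟩
  have main : ∀ m : ℕ, (∑ i ∈ Finset.range m, edist (g (u (i + 1))) (g (u i))) ≤
      eVariationOn f (univ ∩ Icc (u 0) (u m)) := by
    intro m
    induction m with
    | zero => simp
    | succ m ih =>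
        rw [Finset.sum_range_succ]
        calc (∑ i ∈ Finset.range m, edist (g (u (i + 1))) (g (u i)))
              + edist (g (u (m + 1))) (g (u m)) ≤
            eVariationOn f (univ ∩ Icc (u 0) (u m)) +
              eVariationOn f (univ ∩ Icc (u m) (u (m + 1))) :=
              add_le_add ih (step (u m) (u (m + 1)) (hu (Nat.le_succ m)))
          _ = eVariationOn f (univ ∩ Icc (u 0) (u (m + 1))) :=
              eVariationOn.Icc_add_Icc f (hu (Nat.zero_le m)) (hu (Nat.le_succ m)) (mem_univ _)
  exact le_trans (main n) (eVariationOn.mono f inter_subset_left)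

/-- a metric minimizing disc `s : 𝔻 → Y` has no bubbles: for every
point `p ∈ Y`, every connected component of `𝔻 ∖ s⁻¹({p})` contains a point of
the boundary circle `∂𝔻`. -/
theorem metric_minimizing_disc_no_bubbles {Y : Type*} [MetricSpace Y]
    (s : Disc → Y) (hs : IsMetricMinimizingDisc s) :
    ∀ p : Y, ∀ x : Disc, s x ≠ p →
      ∃ u ∈ connectedComponentIn {z : Disc | s z ≠ p} x, OnBdry u := by
  classical
  intro p x hx
  by_contra hno
  push_neg at hno
  set U : Set Disc := {z | s z ≠ p} with hU
  have hUopen : IsOpen U := by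
    have : U = (s ⁻¹' {p})ᶜ := by ext z; simp [hU]
    rw [this]
    exact (isClosed_singleton.preimage hs.1).isOpen_compl
  set C := connectedComponentIn U x with hCdef
  have hxU : x ∈ U := hx
  have hxC : x ∈ C := mem_connectedComponentIn hxU
  have hCopen : IsOpen C := hUopen.connectedComponentIn
  -- the relative frontier of C maps to p
  have hfr : ∀ z : Disc, z ∈ closure C → z ∉ C → s z = p := by
    intro z hz hzC
    by_contra hzp
    have hzU : z ∈ U := hzp
    obtain ⟨w, hw1, hw2⟩ := mem_closure_iff.mp hz _ hUopen.connectedComponentIn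
      (mem_connectedComponentIn hzU)
    have e1 := connectedComponentIn_eq hw1
    have e2 := connectedComponentIn_eq hw2
    have : z ∈ connectedComponentIn U z := mem_connectedComponentIn hzU
    rw [e1, ← e2] at this
    exact hzC this
  -- C is not everything: the boundary point 1 is missing
  have h1disc : (1 : ℂ) ∈ Metric.closedBall (0 : ℂ) 1 := by
    simp [Metric.mem_closedBall]
  have hb : (⟨(1 : ℂ), h1disc⟩ : Disc) ∉ C := by
    intro h
    exact hno _ h (by simp [OnBdry])
  have hCne : C ≠ univ := fun h => hb (h ▸ mem_univ _)
  -- hence the relative frontier is nonempty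
  obtain ⟨y, hyc, hyC⟩ : ∃ z, z ∈ closure C ∧ z ∉ C := by
    by_contra h
    push_neg at h
    have hclosed : IsClosed C := isClosed_of_closure_subset h
    exact hCne (IsClopen.eq_univ ⟨hclosed, hCopen⟩ ⟨x, hxC⟩)
  have hyp : s y = p := hfr y hyc hyC
  -- pick a point x' of C whose image is closer to p than s x
  have hd : (0 : ℝ) < dist (s x) p := dist_pos.mpr hx
  obtain ⟨x', hx'1, hx'2⟩ :
      ∃ w, w ∈ s ⁻¹' (Metric.ball p (dist (s x) p)) ∧ w ∈ C := by
    refine mem_closure_iff.mp hyc _ (Metric.isOpen_ball.preimage hs.1) ?_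
    simp [Set.mem_preimage, Metric.mem_ball, hyp, dist_self, hd]
  have hxx' : s x' ≠ s x := by
    intro h
    have : dist (s x') p < dist (s x) p := by simpa [Metric.mem_ball] using hx'1
    rw [h] at this
    exact lt_irrefl _ this
  -- the collapsed map
  set s' : Disc → Y := fun z => if z ∈ C then p else s z with hs'def
  have hs'cont : Continuous s' := by
    rw [continuous_iff_continuousAt]
    intro z
    by_cases hz : z ∈ C
    · have : s' =ᶠ[nhds z] fun _ => p := by
        filter_upwards [hCopen.mem_nhds hz] with w hw
        simp [hs'def, hw]
      exact continuousAt_const.congr this.symm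
    · by_cases hz' : z ∈ closure C
      · -- z in the relative frontier: s z = p
        have hzp : s z = p := hfr z hz' hz
        rw [Metric.continuousAt_iff]
        intro ε hε
        obtain ⟨δ, hδ, hδ'⟩ := Metric.continuousAt_iff.mp (hs.1.continuousAt (x := z)) ε hε
        refine ⟨δ, hδ, fun {w} hw => ?_⟩
        have hs'z : s' z = p := by simp [hs'def, hz, hzp]
        by_cases hwC : w ∈ C
        · simpa [hs'def, hwC, hz, hzp, dist_self] using hε
        · have := hδ' hw
          simpa [hs'def, hwC, hz, hzp] using this
      · have : s' =ᶠ[nhds z] s := by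
          filter_upwards [(isClosed_closure (s := C)).isOpen_compl.mem_nhds hz'] with w hw
          have : w ∉ C := fun h => hw (subset_closure h)
          simp [hs'def, this]
        exact (hs.1.continuousAt).congr this.symm
  have hbdryeq : ∀ u : Disc, OnBdry u → s' u = s u := by
    intro u hu
    have : u ∉ C := fun h => hno u h hu
    simp [hs'def, this]
  have hTbdry : ∀ u : Disc, OnBdry u → lenPD s' (id u) u = 0 := fun u _ => lenPD_self s' u
  have hshort : ∀ a b : Disc, lenPD s' (id a) (id b) ≤ lenPD s a b := by
    intro a b
    simp only [id]
    exact iInf_mono fun γ => collapse_var_le s p hCopen hfr γ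
  have hiso := hs.2 s' id hs'cont hbdryeq hTbdry hshort x x'
  simp only [id] at hiso
  -- the left-hand side is zero since x and x' are joined inside C
  have hCconn : IsConnected C := isConnected_connectedComponentIn_iff.mpr hxU
  have hCpath : IsPathConnected C := hCopen.isConnected_iff_isPathConnected.mp hCconn
  obtain ⟨γ, hγ⟩ := hCpath.joinedIn x hxC x' hx'2
  have h0 : lenPD s' x x' = 0 := by
    refine le_antisymm (le_trans (iInf_le _ γ) (le_of_eq (eVariationOn.constant_on ?_)))
      zero_le
    rintro u ⟨t, -, rfl⟩ v ⟨t', -, rfl⟩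
    simp [hs'def, hγ t, hγ t']
  rw [h0] at hiso
  have := edist_le_lenPD s x x'
  rw [← hiso] at this
  simp only [nonpos_iff_eq_zero, le_zero_iff] at this
  exact hxx' (by
    have := edist_eq_zero.mp this
    exact (this ▸ rfl : s x = s x').symm)
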